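/- Let α be an automaton automorphism of the rooted d-regular tree, i.e., the set A = {α|_v : v ∈ C*} of sections of α is finite, with |A| = K. Let a, b ∈ C* with b nonempty, and let η = a b^ω. If α fixes the vertex a b^{K+1}, then α fixes the ray η. -/

import Mathlib

/-- If `act` is an automaton automorphism of the rooted tree over alphabet `C`
(length-preserving, with sections `sec v` satisfying the cocycle rule, and with a finite
set of sections of cardinality `K`), `a b : List C` with `b` nonempty, and `act` fixes the
vertex `a b^(K+1)`, then `act` fixes every finite prefix of the ray `η = a b^ω`
(the length-`k` prefix of `a b^ω` is `(a ++ b^k).take k` since `b` is nonempty). -/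
theorem stmt1 {C : Type*} (act : List C → List C) (sec : List C → (List C → List C))
    (hlen : ∀ w, (act w).length = w.length)
    (hnil : sec [] = act)
    (hcocycle : ∀ u w, act (u ++ w) = act u ++ sec u w)
    (K : ℕ)
    (hfin : {f : List C → List C | ∃ v : List C, sec v = f}.Finite)
    (hcard : hfin.toFinset.card = K)
    (a b : List C) (hb : b ≠ [])
    (hfix : act (a ++ (List.replicate (K + 1) b).flatten) = a ++ (List.replicate (K + 1) b).flatten) :
    ∀ k : ℕ, act ((a ++ (List.replicate k b).flatten).take k)
      = (a ++ (List.replicate k b).flatten).take k := by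
  -- A m = a ++ b^m
  set A : ℕ → List C := fun m => a ++ (List.replicate m b).flatten with hA
  have hAsucc : ∀ m, A (m + 1) = A m ++ b := by
    intro m
    simp only [hA, List.replicate_succ', List.flatten_append, List.flatten_cons,
      List.flatten_nil, List.append_nil, List.append_assoc]
  -- if act fixes u ++ w then act fixes u
  have hprefix : ∀ u w, act (u ++ w) = u ++ w → act u = u := by
    intro u w h
    have h2 := hcocycle u w
    rw [h] at h2
    exact ((List.append_inj h2 (hlen u).symm).1).symm
  -- act fixes A m for m ≤ K + 1
  have hfixle : ∀ m, m ≤ K + 1 → act (A m) = A m := by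
    intro m hm
    have : A (K + 1) = A m ++ (List.replicate (K + 1 - m) b).flatten := by
      simp only [hA, List.append_assoc, ← List.flatten_append, ← List.replicate_add]
      rw [Nat.add_sub_cancel' hm]
    exact hprefix _ _ (by rw [← this]; exact hfix)
  -- S m = section at A m
  set S : ℕ → (List C → List C) := fun m => sec (A m) with hS
  -- recursion for S
  have hSsucc : ∀ m x, S (m + 1) x = (S m (b ++ x)).drop b.length := by
    intro m x
    have h1 : act (A (m + 1) ++ x) = act (A (m + 1)) ++ S (m + 1) x := hcocycle _ _
    have h2 : act (A m ++ (b ++ x)) = act (A m) ++ S m (b ++ x) := hcocycle _ _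
    have h3 : A (m + 1) ++ x = A m ++ (b ++ x) := by rw [hAsucc]; simp [List.append_assoc]
    rw [h3, h2] at h1
    have h4 := congrArg (List.drop (A (m + 1)).length) h1
    have e : (A (m + 1)).length = (act (A m)).length + b.length := by
      rw [hlen, hAsucc, List.length_append]
    rw [List.drop_left' (hlen (A (m + 1)))] at h4
    rw [e, List.drop_length_add_append] at h4
    exact h4.symm
  have hSshift : ∀ i j, S i = S j → ∀ t, S (i + t) = S (j + t) := by
    intro i j h t
    induction t with
    | zero => simpa using h
    | succ t ih =>
      funext x
      rw [show i + (t + 1) = (i + t) + 1 by ring, show j + (t + 1) = (j + t) + 1 by ring,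
        hSsucc, hSsucc, ih]
  -- pigeonhole
  obtain ⟨x, hx, y, hy, hxy, hSxy⟩ :
      ∃ x ∈ Finset.range (K + 1), ∃ y ∈ Finset.range (K + 1), x ≠ y ∧ S x = S y := by
    have hmaps : ∀ m ∈ Finset.range (K + 1), S m ∈ hfin.toFinset := by
      intro m _
      simp only [Set.Finite.mem_toFinset, Set.mem_setOf_eq]
      exact ⟨A m, rfl⟩
    have hlt : hfin.toFinset.card < (Finset.range (K + 1)).card := by
      rw [hcard, Finset.card_range]; omega
    exact Finset.exists_ne_map_eq_of_card_lt_of_maps_to hlt hmaps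
  -- wlog i < j
  obtain ⟨i, j, hij, hjK, hSij⟩ : ∃ i j, i < j ∧ j ≤ K ∧ S i = S j := by
    rcases lt_or_gt_of_ne hxy with h | h
    · exact ⟨x, y, h, by simpa using Nat.lt_succ_iff.mp (Finset.mem_range.mp hy), hSxy⟩
    · exact ⟨y, x, h, by simpa using Nat.lt_succ_iff.mp (Finset.mem_range.mp hx), hSxy.symm⟩
  -- S m b = b for all m
  have hSb : ∀ m, S m b = b := by
    intro m
    induction m using Nat.strong_induction_on with
    | _ m ih =>
      by_cases hm : m ≤ K
      · have h1 := hfixle m (by omega)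
        have h2 := hfixle (m + 1) (by omega)
        have h3 := hcocycle (A m) b
        rw [← hAsucc, h2, h1, hAsucc] at h3
        exact (List.append_cancel_left h3).symm
      · have hm' : j ≤ m := by omega
        have : S m = S (i + (m - j)) := by
          have := hSshift i j hSij (m - j)
          rw [Nat.add_sub_cancel' hm'] at this
          exact this.symm
        rw [this]
        exact ih (i + (m - j)) (by omega)
  -- act fixes A m for all m
  have hfixall : ∀ m, act (A m) = A m := by
    intro m
    induction m with
    | zero => exact hfixle 0 (by omega)
    | succ m ih =>
      rw [hAsucc, hcocycle, ih]
      exact congrArg (A m ++ ·) (hSb m)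
  -- conclude
  intro k
  have hfixk := hfixall k
  have hdecomp : A k = (A k).take k ++ (A k).drop k := (List.take_append_drop k (A k)).symm
  have h : act ((A k).take k) ++ sec ((A k).take k) ((A k).drop k) = A k := by
    rw [← hcocycle, List.take_append_drop]; exact hfixk
  have h2 := (List.append_inj (h.trans hdecomp) (hlen _)).1
  show act ((A k).take k) = (A k).take k
  exact h2
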